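/- arXiv:1710.07836 — 3 statements merged into one kernel-verified Lean document; each statement's English description precedes it below -/
import Mathlib

section
/- Let N be a rooted phylogenetic network on X. Then N is tree-based if and only if the vertex set of N can be partitioned into a set of pairwise vertex-disjoint directed paths, each of which ends at a leaf in X. -/
set_option linter.unusedSectionVars false
set_option maxHeartbeats 1000000


open Relation

/-- Out-degree of a vertex in a digraph given by its arc relation. -/
noncomputable def outDeg {V : Type*} (A : V → V → Prop) (v : V) : ℕ := {u | A v u}.ncard
/-- In-degree of a vertex in a digraph given by its arc relation. -/
noncomputable def inDeg {V : Type*} (A : V → V → Prop) (v : V) : ℕ := {u | A u v}.ncard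

/-- A rooted phylogenetic network on leaf set `X`. -/
structure PhyloNet (V : Type*) [Fintype V] [DecidableEq V] where
  Arc : V → V → Prop
  root : V
  X : Finset V
  acyclic : ∀ v, ¬ Relation.TransGen Arc v v
  reach : ∀ v, Relation.ReflTransGen Arc root v
  root_out : 1 ≤ outDeg Arc root
  leaf_iff : ∀ v, v ∈ X ↔ outDeg Arc v = 0
  leaf_in : ∀ v ∈ X, inDeg Arc v = 1
  internal : ∀ v, v ≠ root → v ∉ X →
    (inDeg Arc v = 1 ∧ 2 ≤ outDeg Arc v) ∨ (2 ≤ inDeg Arc v ∧ outDeg Arc v = 1)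

section Defs
variable {V : Type*} [Fintype V] [DecidableEq V]

/-- A reticulation: in-degree at least two. -/
def IsRetic (N : PhyloNet V) (v : V) : Prop := 2 ≤ inDeg N.Arc v
/-- A tree vertex: a non-leaf vertex of in-degree at most one. -/
def IsTreeVert (N : PhyloNet V) (v : V) : Prop := v ∉ N.X ∧ inDeg N.Arc v ≤ 1
/-- An omnian: a non-leaf vertex all of whose children are reticulations. -/
def IsOmnian (N : PhyloNet V) (v : V) : Prop := v ∉ N.X ∧ ∀ u, N.Arc v u → IsRetic N u
/-- A binary network: all in- and out-degrees are at most two. -/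
def IsBinary (N : PhyloNet V) : Prop := ∀ v : V, inDeg N.Arc v ≤ 2 ∧ outDeg N.Arc v ≤ 2

/-- A rooted spanning tree of `N` with the same root as `N`. -/
def IsRSTree (N : PhyloNet V) (T : V → V → Prop) : Prop :=
  (∀ u v, T u v → N.Arc u v) ∧ (∀ v, inDeg T v = 0 ↔ v = N.root) ∧
  (∀ v, v ≠ N.root → inDeg T v = 1)

/-- A support tree: a rooted spanning tree with the same root, all of whose leaves are in `X`. -/
def IsSupportTree (N : PhyloNet V) (T : V → V → Prop) : Prop :=
  IsRSTree N T ∧ ∀ v, outDeg T v = 0 → v ∈ N.X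

/-- Tree-based network. -/
def TreeBased (N : PhyloNet V) : Prop := ∃ T, IsSupportTree N T

/-- A (nonempty, repetition-free) directed path recorded as a list of vertices. -/
def IsPathIn (A : V → V → Prop) (p : List V) : Prop := p ≠ [] ∧ p.Chain' A ∧ p.Nodup
/-- The path ends at a vertex of `X`. -/
def EndsIn (X : Finset V) (p : List V) : Prop := ∃ x ∈ X, p.getLast? = some x
/-- Pairwise vertex-disjoint family of paths. -/
def PairwiseDisj (P : Finset (List V)) : Prop :=
  ∀ p ∈ P, ∀ q ∈ P, p ≠ q → ∀ v : V, v ∈ p → v ∉ q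
/-- A partition of the vertex set of `N` into vertex-disjoint directed paths
ending at leaves in `X`. -/
def IsPathPartition (N : PhyloNet V) (P : Finset (List V)) : Prop :=
  (∀ p ∈ P, IsPathIn N.Arc p ∧ EndsIn N.X p) ∧ PairwiseDisj P ∧ ∀ v : V, ∃ p ∈ P, v ∈ p

/-- A matching in the bipartite graph with edge set `E` (edges from a first copy of `V`
to a second copy of `V`), recorded as a set of edges no two of which share an endpoint. -/
def IsMatchingOn (E : V → V → Prop) (M : Finset (V × V)) : Prop :=
  (∀ e ∈ M, E e.1 e.2) ∧ ∀ e ∈ M, ∀ f ∈ M, (e.1 = f.1 ∨ e.2 = f.2) → e = f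

/-- Size of a maximum matching of the bipartite graph with edge set `E`. -/
noncomputable def maxMatching (E : V → V → Prop) : ℕ :=
  sSup {n | ∃ M : Finset (V × V), IsMatchingOn E M ∧ M.card = n}

/-- An antichain of vertices of `N`. -/
def AntichainIn (N : PhyloNet V) (S : Finset V) : Prop :=
  ∀ u ∈ S, ∀ v ∈ S, u ≠ v → ¬ Relation.TransGen N.Arc u v

/-- The antichain-to-leaf property: from every antichain there are pairwise
vertex-disjoint directed paths to leaves, one starting at each antichain element. -/
def AntichainToLeaf (N : PhyloNet V) : Prop :=
  ∀ S : Finset V, AntichainIn N S →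
    ∃ f : V → List V,
      (∀ s ∈ S, IsPathIn N.Arc (f s) ∧ (f s).head? = some s ∧ EndsIn N.X (f s)) ∧
      ∀ s ∈ S, ∀ t ∈ S, s ≠ t → ∀ v : V, v ∈ f s → v ∉ f t

/-- A temporal network: a real labelling strictly increasing along tree arcs and
constant along reticulation arcs. -/
def Temporal (N : PhyloNet V) : Prop :=
  ∃ l : V → ℝ, ∀ u v, N.Arc u v →
    (IsRetic N v → l u = l v) ∧ (¬ IsRetic N v → l u < l v)

/-- `N'` is a binary refinement of `N`, witnessed by the contraction map `φ`:
`N` is obtained from the binary network `N'` by contracting the arcs whose endpoints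
are identified by `φ`. -/
def IsBinRefinement {V' : Type*} [Fintype V'] [DecidableEq V']
    (N' : PhyloNet V') (N : PhyloNet V) (φ : V' → V) : Prop :=
  IsBinary N' ∧ Function.Surjective φ ∧ φ N'.root = N.root ∧
  N'.X.image φ = N.X ∧ Set.InjOn φ ↑N'.X ∧
  (∀ u v : V, N.Arc u v ↔ ∃ u' v', φ u' = u ∧ φ v' = v ∧ N'.Arc u' v' ∧ φ u' ≠ φ v') ∧
  (∀ a b : V', φ a = φ b →
    Relation.ReflTransGen (fun x y => (N'.Arc x y ∨ N'.Arc y x) ∧ φ x = φ y) a b)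

/-- Edge of the bipartite graph `B_N` between omnians and reticulations. -/
def BEdge (N : PhyloNet V) (o r : V) : Prop := IsOmnian N o ∧ IsRetic N r ∧ N.Arc o r
/-- Edge of the bipartite graph `Z_N` between tree vertices with a reticulation child
and reticulations. -/
def ZEdge (N : PhyloNet V) (t r : V) : Prop :=
  IsTreeVert N t ∧ (∃ r', N.Arc t r' ∧ IsRetic N r') ∧ IsRetic N r ∧ N.Arc t r

/-- `R_t`: reticulations with no reticulation parent. -/
def Rt (N : PhyloNet V) (v : V) : Prop := IsRetic N v ∧ ∀ u, N.Arc u v → ¬ IsRetic N u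
/-- `Q_t`: vertices with a child in `R_t`. -/
def Qt (N : PhyloNet V) (v : V) : Prop := ∃ r, N.Arc v r ∧ Rt N r
/-- Edge of the bipartite graph `J_N`. -/
def JEdge (N : PhyloNet V) (q r : V) : Prop := Qt N q ∧ Rt N r ∧ N.Arc q r

/-- A supporting set for `J_N`. -/
def IsSupportingSet (N : PhyloNet V) (E : Finset (V × V)) : Prop :=
  (∀ e ∈ E, JEdge N e.1 e.2) ∧
  (∀ q, Qt N q → IsOmnian N q → ∃ e ∈ E, e.1 = q) ∧
  (∀ r, Rt N r → ∃! e : V × V, e ∈ E ∧ e.2 = r)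

/-- An arboreal arc: `u` is a reticulation, or `v` is a tree vertex or a leaf. -/
def ArborealArc (N : PhyloNet V) (u v : V) : Prop :=
  N.Arc u v ∧ (IsRetic N u ∨ ¬ IsRetic N v)

/-- The number of support trees of `N`, identified with their arc sets. -/
noncomputable def supCount (N : PhyloNet V) : ℕ :=
  {A' : Finset (V × V) | IsSupportTree N (fun u v => (u, v) ∈ A')}.ncard

/-- The bipartite graph `J_N`, as a simple graph on `Q_t ∪ R_t`. -/
def Jgraph (N : PhyloNet V) : SimpleGraph {v : V // Qt N v ∨ Rt N v} where
  Adj a b := JEdge N a.1 b.1 ∨ JEdge N b.1 a.1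
  symm := ⟨by intro a b h; tauto⟩
  loopless := ⟨by
    rintro a (⟨_, _, h⟩ | ⟨_, _, h⟩) <;> exact N.acyclic _ (Relation.TransGen.single h)⟩

/-- Degree in `J_N`. -/
noncomputable def Jdeg (N : PhyloNet V) (a : {v : V // Qt N v ∨ Rt N v}) : ℕ :=
  ((Jgraph N).neighborSet a).ncard

end Defs

/-- A rooted tree (equivalently, a subdivision of a rooted tree): a rooted digraph
in which every non-root vertex has in-degree one and everything is reachable
from the root. -/
structure RootedDirTree (V : Type*) [Fintype V] [DecidableEq V] where
  Arc : V → V → Prop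
  root : V
  acyclic : ∀ v, ¬ Relation.TransGen Arc v v
  reach : ∀ v, Relation.ReflTransGen Arc root v
  root_in : inDeg Arc root = 0
  in_one : ∀ v, v ≠ root → inDeg Arc v = 1

namespace Stmt3Aux

variable {V : Type*} [Fintype V] [DecidableEq V]

lemma outDeg_ne_zero_iff {T : V → V → Prop} {v : V} :
    outDeg T v ≠ 0 ↔ {u | T v u}.Nonempty := by
  rw [outDeg, Ne, Set.ncard_eq_zero (Set.toFinite _), ← Ne, ← Set.nonempty_iff_ne_empty]

open Classical in
noncomputable def nxt (T : V → V → Prop) (v : V) : V :=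
  if h : {u | T v u}.Nonempty then h.some else v

lemma nxt_spec {T : V → V → Prop} {v : V} (h : outDeg T v ≠ 0) : T v (nxt T v) := by
  rw [outDeg_ne_zero_iff] at h
  rw [nxt, dif_pos h]
  exact h.some_mem

lemma wf_desc {T : V → V → Prop} (hac : ∀ v, ¬ Relation.TransGen T v v) :
    WellFounded (fun a b : V => Relation.TransGen T b a) := by
  have : IsTrans V (fun a b : V => Relation.TransGen T b a) := ⟨fun a b c h1 h2 => h2.trans h1⟩
  have : IsIrrefl V (fun a b : V => Relation.TransGen T b a) := ⟨fun a h => hac a h⟩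
  exact Finite.wellFounded_of_trans_of_irrefl _

lemma wf_asc {T : V → V → Prop} (hac : ∀ v, ¬ Relation.TransGen T v v) :
    WellFounded (fun a b : V => Relation.TransGen T a b) := by
  have : IsTrans V (fun a b : V => Relation.TransGen T a b) := ⟨fun a b c h1 h2 => h1.trans h2⟩
  have : IsIrrefl V (fun a b : V => Relation.TransGen T a b) := ⟨fun a h => hac a h⟩
  exact Finite.wellFounded_of_trans_of_irrefl _

noncomputable def pathFrom (T : V → V → Prop) (hac : ∀ v, ¬ Relation.TransGen T v v) : V → List V :=
  (wf_desc hac).fix (fun v ih =>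
    v :: (if h : outDeg T v = 0 then [] else ih (nxt T v) (Relation.TransGen.single (nxt_spec h))))

lemma pathFrom_eq (T : V → V → Prop) (hac : ∀ v, ¬ Relation.TransGen T v v) (v : V) :
    pathFrom T hac v = v :: (if _ : outDeg T v = 0 then [] else pathFrom T hac (nxt T v)) := by
  rw [pathFrom, WellFounded.fix_eq]

variable {T : V → V → Prop} {hac : ∀ v, ¬ Relation.TransGen T v v}

lemma pathFrom_head (v : V) : (pathFrom T hac v).head? = some v := by
  rw [pathFrom_eq]; rfl

lemma pathFrom_ne_nil (v : V) : pathFrom T hac v ≠ [] := by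
  rw [pathFrom_eq]; simp

lemma mem_pathFrom_self (v : V) : v ∈ pathFrom T hac v := by
  rw [pathFrom_eq]; simp

lemma pathFrom_mem_trans : ∀ (v : V) {w : V}, w ∈ pathFrom T hac v →
    w = v ∨ Relation.TransGen T v w := by
  intro v
  induction v using (wf_desc hac).induction with
  | _ v ih =>
    intro w h
    rw [pathFrom_eq] at h
    rcases List.mem_cons.1 h with rfl | h
    · exact Or.inl rfl
    · by_cases h0 : outDeg T v = 0
      · rw [dif_pos h0] at h; simp at h
      · rw [dif_neg h0] at h
        have hstep : Relation.TransGen T v (nxt T v) := Relation.TransGen.single (nxt_spec h0)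
        rcases ih _ hstep h with rfl | h'
        · exact Or.inr hstep
        · exact Or.inr (hstep.trans h')

lemma pathFrom_nodup : ∀ (v : V), (pathFrom T hac v).Nodup := by
  intro v
  induction v using (wf_desc hac).induction with
  | _ v ih =>
    rw [pathFrom_eq]
    by_cases h0 : outDeg T v = 0
    · rw [dif_pos h0]; simp
    · rw [dif_neg h0]
      have hstep : Relation.TransGen T v (nxt T v) := Relation.TransGen.single (nxt_spec h0)
      refine List.nodup_cons.2 ⟨?_, ih _ hstep⟩
      intro hv
      rcases pathFrom_mem_trans (nxt T v) hv with h | h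
      · rw [← h] at hstep; exact hac v hstep
      · exact hac v (hstep.trans h)

lemma pathFrom_chain : ∀ (v : V), (pathFrom T hac v).Chain' T := by
  intro v
  induction v using (wf_desc hac).induction with
  | _ v ih =>
    rw [pathFrom_eq]
    by_cases h0 : outDeg T v = 0
    · rw [dif_pos h0]; exact List.isChain_singleton v
    · rw [dif_neg h0]
      refine List.isChain_cons.2 ⟨?_, ih _ (Relation.TransGen.single (nxt_spec h0))⟩
      intro y hy
      rw [pathFrom_head] at hy
      cases hy
      exact nxt_spec h0

lemma pathFrom_last : ∀ (v : V), ∃ x, (pathFrom T hac v).getLast? = some x ∧ outDeg T x = 0 := by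
  intro v
  induction v using (wf_desc hac).induction with
  | _ v ih =>
    by_cases h0 : outDeg T v = 0
    · exact ⟨v, by rw [pathFrom_eq, dif_pos h0]; rfl, h0⟩
    · obtain ⟨x, hx1, hx2⟩ := ih _ (Relation.TransGen.single (nxt_spec h0))
      refine ⟨x, ?_, hx2⟩
      rw [pathFrom_eq, dif_neg h0]
      cases hp : pathFrom T hac (nxt T v) with
      | nil => exact absurd hp (pathFrom_ne_nil _)
      | cons a l => rw [hp] at hx1; rw [List.getLast?_cons_cons]; exact hx1

lemma pathFrom_mem_nxt : ∀ (h : V) {v : V}, v ∈ pathFrom T hac h → outDeg T v ≠ 0 →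
    nxt T v ∈ pathFrom T hac h := by
  intro h
  induction h using (wf_desc hac).induction with
  | _ h ih =>
    intro v hm h0
    rw [pathFrom_eq] at hm ⊢
    by_cases hh : outDeg T h = 0
    · rw [dif_pos hh] at hm ⊢
      simp at hm; subst hm; exact absurd hh h0
    · rw [dif_neg hh] at hm ⊢
      rcases List.mem_cons.1 hm with rfl | hm
      · exact List.mem_cons_of_mem _ (mem_pathFrom_self _)
      · exact List.mem_cons_of_mem _ (ih _ (Relation.TransGen.single (nxt_spec hh)) hm h0)

lemma pathFrom_mem_back : ∀ (h : V) {v : V}, v ∈ pathFrom T hac h →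
    v = h ∨ ∃ u, u ∈ pathFrom T hac h ∧ outDeg T u ≠ 0 ∧ nxt T u = v ∧ T u v := by
  intro h
  induction h using (wf_desc hac).induction with
  | _ h ih =>
    intro v hm
    rw [pathFrom_eq] at hm
    rcases List.mem_cons.1 hm with rfl | hm
    · exact Or.inl rfl
    · by_cases hh : outDeg T h = 0
      · rw [dif_pos hh] at hm; simp at hm
      · rw [dif_neg hh] at hm
        have hsubm : ∀ w, w ∈ pathFrom T hac (nxt T h) → w ∈ pathFrom T hac h := by
          intro w hw
          rw [pathFrom_eq, dif_neg hh]
          exact List.mem_cons_of_mem _ hw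
        rcases ih _ (Relation.TransGen.single (nxt_spec hh)) hm with rfl | ⟨u, hu1, hu2, hu3, hu4⟩
        · exact Or.inr ⟨h, mem_pathFrom_self h, hh, rfl, nxt_spec hh⟩
        · exact Or.inr ⟨u, hsubm u hu1, hu2, hu3, hu4⟩

def IsHd (T : V → V → Prop) (v : V) : Prop := ¬ ∃ u, T u v ∧ nxt T u = v

lemma exists_head : ∀ (v : V), ∃ h, IsHd T h ∧ v ∈ pathFrom T hac h := by
  intro v
  induction v using (wf_asc hac).induction with
  | _ v ih =>
    by_cases hv : IsHd T v
    · exact ⟨v, hv, mem_pathFrom_self v⟩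
    · obtain ⟨u, hu1, hu2⟩ := not_not.1 hv
      obtain ⟨h, hh, hm⟩ := ih u (Relation.TransGen.single hu1)
      have h0 : outDeg T u ≠ 0 := outDeg_ne_zero_iff.2 ⟨v, hu1⟩
      exact ⟨h, hh, hu2 ▸ pathFrom_mem_nxt h hm h0⟩

lemma head_unique (hp : ∀ v u₁ u₂ : V, T u₁ v → T u₂ v → u₁ = u₂) {h₁ h₂ : V}
    (H1 : IsHd T h₁) (H2 : IsHd T h₂) :
    ∀ (v : V), v ∈ pathFrom T hac h₁ → v ∈ pathFrom T hac h₂ → h₁ = h₂ := by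
  intro v
  induction v using (wf_asc hac).induction with
  | _ v ih =>
    intro m1 m2
    rcases pathFrom_mem_back h₁ m1 with rfl | ⟨u1, hu1, hn1, he1, ha1⟩
    · rcases pathFrom_mem_back h₂ m2 with rfl | ⟨u2, hu2, hn2, he2, ha2⟩
      · rfl
      · exact absurd ⟨u2, ha2, he2⟩ H1
    · rcases pathFrom_mem_back h₂ m2 with rfl | ⟨u2, hu2, hn2, he2, ha2⟩
      · exact absurd ⟨u1, ha1, he1⟩ H2
      · have huu : u1 = u2 := hp v u1 u2 ha1 ha2
        subst huu
        exact ih u1 (Relation.TransGen.single ha1) hu1 hu2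



lemma chain'_of_infix {α : Type*} {R : α → α → Prop} {u v : α} :
    ∀ {p : List α}, p.Chain' R → [u, v] <:+: p → R u v := by
  intro p hc h
  obtain ⟨s, t, e⟩ := h
  subst e
  induction s with
  | nil => simp only [List.nil_append, List.cons_append, List.isChain_cons_cons] at hc; exact (List.isChain_cons_cons.1 hc).1
  | cons a s ih =>
    apply ih
    rw [List.cons_append] at hc; exact hc.tail

lemma nodup_split_unique {α : Type*} {x : α} :
    ∀ (s : List α) (s' : List α) {t t' : List α}, (s ++ x :: t).Nodup →
      s ++ x :: t = s' ++ x :: t' → s = s' ∧ t = t' := by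
  intro s
  induction s with
  | nil =>
    intro s' t t' hn h
    cases s' with
    | nil => simpa using h
    | cons a s' =>
      exfalso
      simp only [List.nil_append, List.cons_append, List.cons.injEq] at h
      obtain ⟨rfl, h2⟩ := h
      have hx : x ∈ t := by rw [h2]; simp
      exact (List.nodup_cons.1 hn).1 hx
  | cons a s ih =>
    intro s' t t' hn h
    cases s' with
    | nil =>
      exfalso
      simp only [List.cons_append, List.nil_append, List.cons.injEq] at h
      obtain ⟨rfl, h2⟩ := h
      rw [List.cons_append] at hn
      exact (List.nodup_cons.1 hn).1 (by simp)
    | cons a' s' =>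
      simp only [List.cons_append, List.cons.injEq] at h
      obtain ⟨rfl, h2⟩ := h
      obtain ⟨h3, h4⟩ := ih s' (List.nodup_cons.1 (by simpa using hn)).2 h2
      exact ⟨by rw [h3], h4⟩

lemma infix_pred_unique {α : Type*} {p : List α} (hn : p.Nodup) {u₁ u₂ v : α}
    (h1 : [u₁, v] <:+: p) (h2 : [u₂, v] <:+: p) : u₁ = u₂ := by
  obtain ⟨s₁, t₁, e1⟩ := h1
  obtain ⟨s₂, t₂, e2⟩ := h2
  have e1' : p = (s₁ ++ [u₁]) ++ v :: t₁ := by rw [← e1]; simp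
  have e2' : p = (s₂ ++ [u₂]) ++ v :: t₂ := by rw [← e2]; simp
  have := nodup_split_unique (x := v) (s₁ ++ [u₁]) (s₂ ++ [u₂])
    (by rw [← e1']; exact hn) (by rw [← e1', ← e2'])
  have h := this.1
  rw [← List.concat_eq_append, ← List.concat_eq_append] at h
  exact (List.concat_inj.1 h).2

lemma not_infix_head {α : Type*} {p : List α} (hn : p.Nodup) {u v : α}
    (hh : p.head? = some v) (h : [u, v] <:+: p) : False := by
  obtain ⟨s, t, e⟩ := h
  subst e
  cases s with
  | nil =>
    simp only [List.nil_append, List.cons_append, List.head?_cons, Option.some.injEq] at hh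
    subst hh
    simp at hn
  | cons a s =>
    simp only [List.cons_append, List.head?_cons, Option.some.injEq] at hh
    subst hh
    rw [List.cons_append, List.cons_append] at hn
    exact (List.nodup_cons.1 hn).1 (by simp)

lemma mem_head_or_pred {α : Type*} {v : α} :
    ∀ {p : List α}, v ∈ p → p.head? = some v ∨ ∃ u, [u, v] <:+: p := by
  intro p
  induction p with
  | nil => simp
  | cons a t ih =>
    intro hv
    rcases List.mem_cons.1 hv with rfl | hv
    · exact Or.inl rfl
    · rcases ih hv with hh | ⟨u, hu⟩
      · right
        refine ⟨a, ?_⟩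
        cases t with
        | nil => simp at hh
        | cons b t' =>
          simp only [List.head?_cons, Option.some.injEq] at hh
          subst hh
          exact ⟨[], t', rfl⟩
      · exact Or.inr ⟨u, hu.trans (List.infix_cons (List.infix_refl _))⟩

lemma mem_last_or_succ {α : Type*} {v : α} :
    ∀ {p : List α}, v ∈ p → p.getLast? = some v ∨ ∃ w, [v, w] <:+: p := by
  intro p
  induction p with
  | nil => simp
  | cons a t ih =>
    intro hv
    cases t with
    | nil =>
      simp only [List.mem_singleton] at hv
      subst hv
      exact Or.inl rfl
    | cons b t' =>
      rcases List.mem_cons.1 hv with rfl | hv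
      · exact Or.inr ⟨b, [], t', by simp⟩
      · rcases ih hv with h | ⟨w, hw⟩
        · left; rw [List.getLast?_cons_cons]; exact h
        · exact Or.inr ⟨w, hw.trans (List.infix_cons (List.infix_refl _))⟩


section Back
variable {V : Type*} [Fintype V] [DecidableEq V]

lemma treeBased_of_partition (N : PhyloNet V) (P : Finset (List V))
    (hIs : IsPathPartition N P) : TreeBased N := by
  obtain ⟨hPaths, hDisj, hCov⟩ := hIs
  classical
  have hroot_in : ∀ u, ¬ N.Arc u N.root := fun u hu =>
    N.acyclic N.root (Relation.TransGen.tail' (N.reach u) hu)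
  have hparent : ∀ v : V, ∃ u, v ≠ N.root → N.Arc u v := by
    intro v
    by_cases hv : v = N.root
    · exact ⟨v, fun h => absurd hv h⟩
    · rcases (N.reach v).cases_tail with h | ⟨c, _, hc⟩
      · exact absurd h hv
      · exact ⟨c, fun _ => hc⟩
  choose par hpar using hparent
  set T : V → V → Prop := fun u v =>
    (∃ p ∈ P, [u, v] <:+: p) ∨ ((∃ p ∈ P, p.head? = some v) ∧ v ≠ N.root ∧ u = par v)
    with hT
  have huniq : ∀ v : V, ∀ p ∈ P, ∀ q ∈ P, v ∈ p → v ∈ q → p = q := by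
    intro v p hp q hq hvp hvq
    by_contra hne
    exact hDisj p hp q hq hne v hvp hvq
  have hsub : ∀ u v, T u v → N.Arc u v := by
    rintro u v (⟨p, hp, hinf⟩ | ⟨_, hv, rfl⟩)
    · exact chain'_of_infix (hPaths p hp).1.2.1 hinf
    · exact hpar v hv
  have hT_root : ∀ u, ¬ T u N.root := by
    rintro u (⟨p, hp, hinf⟩ | ⟨_, hv, _⟩)
    · exact hroot_in u (chain'_of_infix (hPaths p hp).1.2.1 hinf)
    · exact hv rfl
  have hmem_head : ∀ (q : List V) (v : V), q.head? = some v → v ∈ q := by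
    intro q v hq
    cases q with
    | nil => simp at hq
    | cons a t =>
      simp only [List.head?_cons, Option.some.injEq] at hq
      subst hq
      exact List.mem_cons_self
  have hT_head : ∀ v, v ≠ N.root → (∃ p ∈ P, p.head? = some v) →
      {u | T u v} = {par v} := by
    intro v hv hh
    ext u
    simp only [Set.mem_setOf_eq, Set.mem_singleton_iff]
    constructor
    · rintro (⟨p, hp, hinf⟩ | ⟨_, _, rfl⟩)
      · exfalso
        obtain ⟨q, hq, hqh⟩ := hh
        have hvq : v ∈ q := hmem_head q v hqh
        have hvp : v ∈ p := hinf.subset (by simp)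
        have hpq : p = q := huniq v p hp q hq hvp hvq
        subst hpq
        exact not_infix_head (hPaths p hp).1.2.2 hqh hinf
      · rfl
    · rintro rfl
      exact Or.inr ⟨hh, hv, rfl⟩
  have hT_nonhead : ∀ v, v ≠ N.root → ¬ (∃ p ∈ P, p.head? = some v) →
      ∃ u₀, {u | T u v} = {u₀} := by
    intro v hv hh
    obtain ⟨p, hp, hvp⟩ := hCov v
    rcases mem_head_or_pred hvp with hhead | ⟨u₀, hu₀⟩
    · exact absurd ⟨p, hp, hhead⟩ hh
    refine ⟨u₀, ?_⟩
    ext u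
    simp only [Set.mem_setOf_eq, Set.mem_singleton_iff]
    constructor
    · rintro (⟨q, hq, hinf⟩ | ⟨hh', _, _⟩)
      · have hqp : q = p := huniq v q hq p hp (hinf.subset (by simp)) hvp
        subst hqp
        exact infix_pred_unique (hPaths q hq).1.2.2 hinf hu₀
      · exact absurd hh' hh
    · rintro rfl
      exact Or.inl ⟨p, hp, hu₀⟩
  have hdeg1 : ∀ v, v ≠ N.root → inDeg T v = 1 := by
    intro v hv
    by_cases hh : ∃ p ∈ P, p.head? = some v
    · rw [inDeg, hT_head v hv hh, Set.ncard_singleton]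
    · obtain ⟨u₀, he⟩ := hT_nonhead v hv hh
      rw [inDeg, he, Set.ncard_singleton]
  refine ⟨T, ⟨hsub, ?_, hdeg1⟩, ?_⟩
  · intro v
    constructor
    · intro h0
      by_contra hv
      rw [hdeg1 v hv] at h0
      exact one_ne_zero h0
    · rintro rfl
      have he : {u | T u N.root} = ∅ := by
        ext u; simp only [Set.mem_setOf_eq, Set.mem_empty_iff_false, iff_false]
        exact hT_root u
      rw [inDeg, he, Set.ncard_empty]
  · intro v h0
    obtain ⟨p, hp, hvp⟩ := hCov v
    rcases mem_last_or_succ hvp with hl | ⟨w, hw⟩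
    · obtain ⟨x, hxX, hxl⟩ := (hPaths p hp).2
      rw [hl] at hxl
      rw [Option.some.injEq] at hxl
      rw [← hxl] at hxX
      exact hxX
    · exfalso
      have hTw : T v w := Or.inl ⟨p, hp, hw⟩
      have : outDeg T v ≠ 0 := outDeg_ne_zero_iff.2 ⟨w, hTw⟩
      exact this h0

end Back

end Stmt3Aux
/-- tree-based iff the vertex set can be partitioned into
vertex-disjoint directed paths each ending at a leaf in `X`. -/
theorem stmt3 {V : Type*} [Fintype V] [DecidableEq V] (N : PhyloNet V) :
    TreeBased N ↔ ∃ P : Finset (List V), IsPathPartition N P := by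
  constructor
  · rintro ⟨T, ⟨hsub, hin0, hin1⟩, hleaf⟩
    have hac : ∀ v, ¬ Relation.TransGen T v v := fun v h => N.acyclic v (Relation.TransGen.mono hsub v v h)
    have hpp : ∀ v u₁ u₂ : V, T u₁ v → T u₂ v → u₁ = u₂ := by
      intro v u₁ u₂ h1 h2
      have hle : inDeg T v ≤ 1 := by
        by_cases hv : v = N.root
        · have := (hin0 v).2 hv; omega
        · exact le_of_eq (hin1 v hv)
      exact (Set.ncard_le_one (Set.toFinite _)).1 hle u₁ h1 u₂ h2
    classical
    refine ⟨(Finset.univ.filter (fun h => Stmt3Aux.IsHd T h)).image (Stmt3Aux.pathFrom T hac),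
      ?_, ?_, ?_⟩
    · intro p hp'
      obtain ⟨h, _, rfl⟩ := Finset.mem_image.1 hp'
      refine ⟨⟨Stmt3Aux.pathFrom_ne_nil h,
        List.IsChain.imp hsub (Stmt3Aux.pathFrom_chain h), Stmt3Aux.pathFrom_nodup h⟩, ?_⟩
      obtain ⟨x, hx1, hx2⟩ := Stmt3Aux.pathFrom_last (T := T) (hac := hac) h
      exact ⟨x, hleaf x hx2, hx1⟩
    · intro p hp1 q hq1 hne v hvp hvq
      obtain ⟨h₁, hh₁, rfl⟩ := Finset.mem_image.1 hp1
      obtain ⟨h₂, hh₂, rfl⟩ := Finset.mem_image.1 hq1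
      have hh₁' := (Finset.mem_filter.1 hh₁).2
      have hh₂' := (Finset.mem_filter.1 hh₂).2
      exact hne (by rw [Stmt3Aux.head_unique hpp hh₁' hh₂' v hvp hvq])
    · intro v
      obtain ⟨h, hh, hm⟩ := Stmt3Aux.exists_head (T := T) (hac := hac) v
      exact ⟨_, Finset.mem_image_of_mem _ (Finset.mem_filter.2 ⟨Finset.mem_univ _, hh⟩), hm⟩
  · rintro ⟨P, hP⟩
    exact Stmt3Aux.treeBased_of_partition N P hP
end

section
/- Let N be a rooted phylogenetic network on X with vertex set V. Then N is tree-based if and only if for every subset U of V there exists a set of pairwise vertex-disjoint directed paths in N, each ending at a leaf in X, such that each element of U lies on exactly one of the paths. -/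
open Relation

/-- tree-based iff for every subset `U` of vertices there are
pairwise vertex-disjoint paths ending at leaves in `X` with each element of `U`
on exactly one path. -/
theorem stmt4 {V : Type*} [Fintype V] [DecidableEq V] (N : PhyloNet V) :
    TreeBased N ↔
      ∀ U : Finset V, ∃ P : Finset (List V),
        (∀ p ∈ P, IsPathIn N.Arc p ∧ EndsIn N.X p) ∧ PairwiseDisj P ∧
        ∀ u ∈ U, ∃! p : List V, p ∈ P ∧ u ∈ p := by
  classical
  constructor
  · rintro ⟨T, ⟨hTsub, hTin0, hTin1⟩, hTleaf⟩
    haveI : IsTrans V (fun a b => TransGen N.Arc b a) := ⟨fun a b c h1 h2 => h2.trans h1⟩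
    haveI : IsIrrefl V (fun a b => TransGen N.Arc b a) := ⟨N.acyclic⟩
    haveI : IsTrans V (fun a b => TransGen N.Arc a b) := ⟨fun a b c h1 h2 => h1.trans h2⟩
    haveI : IsIrrefl V (fun a b => TransGen N.Arc a b) := ⟨N.acyclic⟩
    have wfD : WellFounded (fun a b : V => TransGen N.Arc b a) :=
      Finite.wellFounded_of_trans_of_irrefl _
    have wfU : WellFounded (fun a b : V => TransGen N.Arc a b) :=
      Finite.wellFounded_of_trans_of_irrefl _
    have hc : ∀ v : V, ∃ u, v ∉ N.X → T v u := by
      intro v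
      by_cases hv : v ∈ N.X
      · exact ⟨v, fun h => (h hv).elim⟩
      · have h0 : outDeg T v ≠ 0 := fun h => hv (hTleaf v h)
        simp only [outDeg] at h0
        obtain ⟨u, hu⟩ := Set.nonempty_of_ncard_ne_zero h0
        exact ⟨u, fun _ => hu⟩
    choose c hcT using hc
    have hcA : ∀ v, v ∉ N.X → N.Arc v (c v) := fun v h => hTsub _ _ (hcT v h)
    have hstop : ∀ v : V, ∃ n, c^[n] v ∈ N.X := by
      intro v
      refine wfD.induction (C := fun v => ∃ n, c^[n] v ∈ N.X) v fun v IH => ?_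
      by_cases hv : v ∈ N.X
      · exact ⟨0, hv⟩
      · obtain ⟨n, hn⟩ := IH (c v) (TransGen.single (hcA v hv))
        exact ⟨n + 1, by rwa [Function.iterate_succ_apply]⟩
    set m : V → ℕ := fun v => Nat.find (hstop v) with hm
    have hmX : ∀ v, c^[m v] v ∈ N.X := by
      intro v; simp only [hm]; exact Nat.find_spec (hstop v)
    have hmlt : ∀ v i, i < m v → c^[i] v ∉ N.X := by
      intro v i hi; simp only [hm] at hi; exact Nat.find_min (hstop v) hi
    have hstep : ∀ v i, i < m v → N.Arc (c^[i] v) (c^[i + 1] v) := by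
      intro v i hi
      rw [Function.iterate_succ_apply']
      exact hcA _ (hmlt v i hi)
    have htg : ∀ v i j, i < j → j ≤ m v → TransGen N.Arc (c^[i] v) (c^[j] v) := by
      intro v i j
      induction j with
      | zero => intro h1 _; exact absurd h1 (Nat.not_lt_zero i)
      | succ j IH =>
        intro hij hj
        rcases lt_or_eq_of_le (Nat.lt_succ_iff.mp hij) with h | h
        · exact (IH h (by omega)).tail (hstep v j (by omega))
        · rw [← h]
          exact TransGen.single (hstep v i (by omega))
    set path : V → List V := fun v => (List.range (m v + 1)).map (fun i => c^[i] v) with hpath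
    have hmemp : ∀ v u, u ∈ path v ↔ ∃ i, i ≤ m v ∧ c^[i] v = u := by
      intro v u
      simp only [hpath, List.mem_map, List.mem_range, Nat.lt_succ_iff]
    have hpathP : ∀ v, IsPathIn N.Arc (path v) := by
      intro v
      refine ⟨by simp [hpath], ?_, ?_⟩
      · simp only [hpath]
        show List.IsChain _ _
        rw [List.isChain_map]
        exact (List.isChain_range_succ _ _).mpr (fun i hi => hstep v i hi)
      · simp only [hpath]
        refine List.Nodup.map_on ?_ List.nodup_range
        intro i hi j hj hij
        rw [List.mem_range, Nat.lt_succ_iff] at hi hj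
        rcases lt_trichotomy i j with h | h | h
        · have := htg v i j h hj
          rw [hij] at this
          exact absurd this (N.acyclic _)
        · exact h
        · have := htg v j i h hi
          rw [hij] at this
          exact absurd this (N.acyclic _)
    have hlast : ∀ v, (path v).getLast? = some (c^[m v] v) := by
      intro v
      simp only [hpath]
      rw [List.range_succ, List.map_append]
      simp [List.getLast?_concat]
    have hEnds : ∀ v, EndsIn N.X (path v) := fun v => ⟨c^[m v] v, hmX v, hlast v⟩
    have hinj : ∀ a b, a ∉ N.X → b ∉ N.X → c a = c b → a = b := by
      intro a b ha hb hab
      have h1 : T a (c a) := hcT a ha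
      have h2 : T b (c a) := by rw [hab]; exact hcT b hb
      have hle : inDeg T (c a) ≤ 1 := by
        by_cases hr : c a = N.root
        · rw [(hTin0 (c a)).mpr hr]; omega
        · rw [hTin1 (c a) hr]
      simp only [inDeg] at hle
      exact (Set.ncard_le_one (Set.toFinite _)).mp hle a h1 b h2
    have hcover : ∀ u : V, ∃ v, (∀ w, ¬(w ∉ N.X ∧ c w = v)) ∧ u ∈ path v := by
      intro u
      refine wfU.induction (C := fun u => ∃ v, (∀ w, ¬(w ∉ N.X ∧ c w = v)) ∧ u ∈ path v) u fun u IH => ?_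
      by_cases hu : ∃ w, w ∉ N.X ∧ c w = u
      · obtain ⟨w, hw, hcw⟩ := hu
        have harc : N.Arc w u := by rw [← hcw]; exact hcA w hw
        obtain ⟨v, hv, hwv⟩ := IH w (TransGen.single harc)
        obtain ⟨i, hi, hci⟩ := (hmemp v w).mp hwv
        have hilt : i < m v := by
          rcases lt_or_eq_of_le hi with h | h
          · exact h
          · exfalso; rw [h] at hci; exact hw (hci ▸ hmX v)
        refine ⟨v, hv, (hmemp v u).mpr ⟨i + 1, hilt, ?_⟩⟩
        rw [Function.iterate_succ_apply', hci, hcw]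
      · exact ⟨u, fun w hw => hu ⟨w, hw⟩, (hmemp u u).mpr ⟨0, Nat.zero_le _, rfl⟩⟩
    have key : ∀ i j v v', (∀ w, ¬(w ∉ N.X ∧ c w = v)) → (∀ w, ¬(w ∉ N.X ∧ c w = v')) →
        i ≤ m v → j ≤ m v' → c^[i] v = c^[j] v' → v = v' := by
      intro i
      induction i with
      | zero =>
        intro j v v' hv hv' _ hj h
        cases j with
        | zero => simpa using h
        | succ j =>
          exfalso
          rw [Function.iterate_succ_apply'] at h
          exact hv (c^[j] v') ⟨hmlt v' j (by omega), h.symm⟩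
      | succ i IH =>
        intro j v v' hv hv' hi hj h
        cases j with
        | zero =>
          exfalso
          rw [Function.iterate_succ_apply'] at h
          exact hv' (c^[i] v) ⟨hmlt v i (by omega), h⟩
        | succ j =>
          rw [Function.iterate_succ_apply', Function.iterate_succ_apply'] at h
          exact IH j v v' hv hv' (by omega) (by omega)
            (hinj _ _ (hmlt v i (by omega)) (hmlt v' j (by omega)) h)
    intro U
    refine ⟨(Finset.univ.filter (fun v => ∀ w, ¬(w ∉ N.X ∧ c w = v))).image path, ?_, ?_, ?_⟩
    · intro p hp
      obtain ⟨v, _, rfl⟩ := Finset.mem_image.mp hp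
      exact ⟨hpathP v, hEnds v⟩
    · intro p hp q hq hpq u hup huq
      obtain ⟨v, hv, rfl⟩ := Finset.mem_image.mp hp
      obtain ⟨v', hv', rfl⟩ := Finset.mem_image.mp hq
      obtain ⟨i, hi, hci⟩ := (hmemp v u).mp hup
      obtain ⟨j, hj, hcj⟩ := (hmemp v' u).mp huq
      have := key i j v v' (Finset.mem_filter.mp hv).2 (Finset.mem_filter.mp hv').2 hi hj
        (by rw [hci, hcj])
      exact hpq (by rw [this])
    · intro u _
      obtain ⟨v, hv, huv⟩ := hcover u
      refine ⟨path v, ⟨Finset.mem_image.mpr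
        ⟨v, Finset.mem_filter.mpr ⟨Finset.mem_univ v, hv⟩, rfl⟩, huv⟩, ?_⟩
      rintro q ⟨hq, huq⟩
      obtain ⟨v', hv', rfl⟩ := Finset.mem_image.mp hq
      obtain ⟨i, hi, hci⟩ := (hmemp v' u).mp huq
      obtain ⟨j, hj, hcj⟩ := (hmemp v u).mp huv
      have := key i j v' v (Finset.mem_filter.mp hv').2 hv hi hj (by rw [hci, hcj])
      rw [this]
  · intro H
    obtain ⟨P, hP1, hP2, hP3⟩ := H Finset.univ
    have hP3' : ∀ u : V, ∃! p, p ∈ P ∧ u ∈ p := fun u => hP3 u (Finset.mem_univ u)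
    choose pth hpth using fun u => (hP3' u).exists
    have hpthP : ∀ u, pth u ∈ P := fun u => (hpth u).1
    have hpthmem : ∀ u, u ∈ pth u := fun u => (hpth u).2
    have hpthuniq : ∀ u q, q ∈ P → u ∈ q → q = pth u :=
      fun u q hq hu => (hP3' u).unique ⟨hq, hu⟩ ⟨hpthP u, hpthmem u⟩
    have hrootin : ∀ u, ¬ N.Arc u N.root :=
      fun u h => N.acyclic _ (Relation.TransGen.tail' (N.reach u) h)
    have hidx : ∀ v, (pth v).idxOf v < (pth v).length :=
      fun v => List.idxOf_lt_length_iff.mpr (hpthmem v)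
    have hvidx : ∀ v, (pth v)[(pth v).idxOf v]? = some v := by
      intro v
      rw [List.getElem?_eq_getElem (hidx v)]
      exact congrArg some (List.getElem_idxOf (hidx v))
    have hchain : ∀ p ∈ P, ∀ (k : ℕ) (a b : V), p[k]? = some a → p[k + 1]? = some b →
        N.Arc a b := by
      intro p hp k a b ha hb
      obtain ⟨hk1, hb'⟩ := List.getElem?_eq_some_iff.mp hb
      obtain ⟨hk, ha'⟩ := List.getElem?_eq_some_iff.mp ha
      have hch := List.isChain_iff_getElem.mp (hP1 p hp).1.2.1 k (by omega)
      rw [← ha', ← hb']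
      exact hch
    have hnodupinj : ∀ p ∈ P, ∀ (k l : ℕ) (a : V), p[k]? = some a → p[l]? = some a →
        k = l := by
      intro p hp k l a ha hb
      obtain ⟨hk, ha'⟩ := List.getElem?_eq_some_iff.mp ha
      obtain ⟨hl, hb'⟩ := List.getElem?_eq_some_iff.mp hb
      exact ((hP1 p hp).1.2.2.getElem_inj_iff).mp (ha'.trans hb'.symm)
    have hpar : ∀ v : V, ∃ u, v ≠ N.root →
        N.Arc u v ∧ ((pth v).idxOf v ≠ 0 → (pth v)[(pth v).idxOf v - 1]? = some u) := by
      intro v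
      by_cases hv : v = N.root
      · exact ⟨v, fun h => absurd hv h⟩
      by_cases h0 : (pth v).idxOf v = 0
      · rcases (N.reach v).cases_tail with h | ⟨u, _, hu⟩
        · exact absurd h hv
        · exact ⟨u, fun _ => ⟨hu, fun h' => absurd h0 h'⟩⟩
      · have hi := hidx v
        have h1 : (pth v).idxOf v - 1 < (pth v).length := by omega
        refine ⟨(pth v)[(pth v).idxOf v - 1], fun _ =>
          ⟨?_, fun _ => List.getElem?_eq_getElem h1⟩⟩
        apply hchain (pth v) (hpthP v) ((pth v).idxOf v - 1) _ v (List.getElem?_eq_getElem h1)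
        have he : (pth v).idxOf v - 1 + 1 = (pth v).idxOf v := by omega
        rw [he]
        exact hvidx v
    choose par hparspec using hpar
    have hdeg1 : ∀ v, v ≠ N.root → inDeg (fun u v => v ≠ N.root ∧ u = par v) v = 1 := by
      intro v hv
      have hset : {u : V | v ≠ N.root ∧ u = par v} = {par v} := by ext u; simp [hv]
      simp only [inDeg]
      rw [hset]
      exact Set.ncard_singleton _
    have hdeg0 : inDeg (fun u v => v ≠ N.root ∧ u = par v) N.root = 0 := by
      have hset : {u : V | N.root ≠ N.root ∧ u = par N.root} = ∅ := by ext u; simp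
      simp only [inDeg]
      rw [hset]
      exact Set.ncard_empty _
    refine ⟨fun u v => v ≠ N.root ∧ u = par v, ⟨?_, ?_, ?_⟩, ?_⟩
    · rintro u v ⟨hv, rfl⟩
      exact (hparspec v hv).1
    · intro v
      constructor
      · intro h
        by_contra hv
        rw [hdeg1 v hv] at h
        exact one_ne_zero h
      · rintro rfl
        exact hdeg0
    · intro v hv
      exact hdeg1 v hv
    · intro v h
      by_contra hv
      obtain ⟨x, hx, hgl⟩ := (hP1 (pth v) (hpthP v)).2
      rw [List.getLast?_eq_getElem?] at hgl
      have hi := hidx v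
      by_cases hl : (pth v).idxOf v = (pth v).length - 1
      · have hthis := hvidx v
        rw [hl] at hthis
        rw [hthis] at hgl
        obtain rfl := Option.some.inj hgl
        exact hv hx
      · have h1 : (pth v).idxOf v + 1 < (pth v).length := by omega
        obtain ⟨w, hw⟩ : ∃ w, (pth v)[(pth v).idxOf v + 1]? = some w :=
          ⟨_, List.getElem?_eq_getElem h1⟩
        have harc : N.Arc v w := hchain (pth v) (hpthP v) _ v w (hvidx v) hw
        have hwroot : w ≠ N.root := fun e => hrootin v (e ▸ harc)
        have hwp : w ∈ pth v := by
          obtain ⟨hk, hw'⟩ := List.getElem?_eq_some_iff.mp hw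
          exact hw' ▸ List.getElem_mem hk
        have hpw : pth v = pth w := hpthuniq w (pth v) (hpthP v) hwp
        have hvw : (pth v)[(pth v).idxOf w]? = some w := by
          have := hvidx w
          rwa [← hpw] at this
        have hiw : (pth v).idxOf w = (pth v).idxOf v + 1 :=
          hnodupinj (pth v) (hpthP v) _ _ w hvw hw
        have hne : (pth w).idxOf w ≠ 0 := by
          rw [← hpw]; omega
        have hpe := (hparspec w hwroot).2 hne
        rw [← hpw, hiw] at hpe
        simp only [Nat.add_sub_cancel] at hpe
        have hv2 := hvidx v
        rw [hpe] at hv2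
        have hT : (fun u v => v ≠ N.root ∧ u = par v) v w :=
          ⟨hwroot, (Option.some.inj hv2).symm⟩
        simp only [outDeg] at h
        rw [Set.ncard_eq_zero (Set.toFinite _)] at h
        rw [Set.eq_empty_iff_forall_notMem] at h
        exact h w hT
end

section
/- Let N = (V,A) be a tree-based rooted phylogenetic network, and let A' be a subset of A. Then A' is the arc set of a support tree for N if and only if A' is the union of the set of arboreal arcs of N with a supporting set for the bipartite graph J_N. -/
open Relation

section AuxProof
variable {V : Type*} [Fintype V] [DecidableEq V]

lemma pn_no_arc_root (N : PhyloNet V) (u : V) : ¬ N.Arc u N.root := fun h =>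
  N.acyclic N.root (Relation.TransGen.tail' (N.reach u) h)

lemma pn_indeg_root (N : PhyloNet V) : inDeg N.Arc N.root = 0 := by
  have h : {u | N.Arc u N.root} = ∅ := by
    ext u; simp [pn_no_arc_root N u]
  simp [inDeg, h]

lemma not_retic_iff (N : PhyloNet V) (v : V) : ¬ IsRetic N v ↔ inDeg N.Arc v ≤ 1 := by
  unfold IsRetic; omega

lemma retic_ne_root (N : PhyloNet V) {v : V} (h : IsRetic N v) : v ≠ N.root := by
  intro e
  unfold IsRetic at h
  rw [e, pn_indeg_root] at h
  omega

lemma retic_not_leaf (N : PhyloNet V) {v : V} (h : IsRetic N v) : v ∉ N.X := by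
  intro hx
  have h1 := N.leaf_in v hx
  unfold IsRetic at h
  omega

lemma indeg_one_of (N : PhyloNet V) {v : V} (hr : v ≠ N.root) (h : ¬ IsRetic N v) :
    inDeg N.Arc v = 1 := by
  by_cases hx : v ∈ N.X
  · exact N.leaf_in v hx
  · rcases N.internal v hr hx with ⟨h1, _⟩ | ⟨h2, _⟩
    · exact h1
    · exact absurd h2 h

lemma retic_out_one (N : PhyloNet V) {v : V} (h : IsRetic N v) : outDeg N.Arc v = 1 := by
  rcases N.internal v (retic_ne_root N h) (retic_not_leaf N h) with ⟨h1, _⟩ | ⟨_, h2⟩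
  · exact absurd h ((not_retic_iff N v).2 (le_of_eq h1))
  · exact h2

lemma eq_of_ncard_one {s : Set V} (h : s.ncard = 1) {a b : V} (ha : a ∈ s) (hb : b ∈ s) :
    a = b := by
  obtain ⟨c, rfl⟩ := Set.ncard_eq_one.1 h
  rw [Set.mem_singleton_iff] at ha hb
  rw [ha, hb]

lemma arc_into_unique (N : PhyloNet V) {v : V} (h : ¬ IsRetic N v) {a b : V}
    (ha : N.Arc a v) (hb : N.Arc b v) : a = b := by
  have hr : v ≠ N.root := fun e => pn_no_arc_root N a (e ▸ ha)
  exact eq_of_ncard_one (indeg_one_of N hr h) ha hb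

lemma arc_out_unique (N : PhyloNet V) {v : V} (h : IsRetic N v) {a b : V}
    (ha : N.Arc v a) (hb : N.Arc v b) : a = b :=
  eq_of_ncard_one (retic_out_one N h) ha hb

lemma exists_in_arc {T : V → V → Prop} {v : V} (h : inDeg T v = 1) : ∃ u, T u v := by
  have : ({u | T u v}).ncard ≠ 0 := by rw [show ({u | T u v}).ncard = inDeg T v from rfl, h]; omega
  exact Set.nonempty_of_ncard_ne_zero this

lemma in_arc_unique {T : V → V → Prop} {v : V} (h : inDeg T v = 1) {a b : V}
    (ha : T a v) (hb : T b v) : a = b :=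
  eq_of_ncard_one h ha hb

lemma exists_out_arc {T : V → V → Prop} {v : V} (h : outDeg T v ≠ 0) : ∃ u, T v u :=
  Set.nonempty_of_ncard_ne_zero h

lemma rst_arc_of_nonretic (N : PhyloNet V) {T : V → V → Prop} (hT : IsRSTree N T)
    {u v : V} (hv : ¬ IsRetic N v) (h : N.Arc u v) : T u v := by
  have hr : v ≠ N.root := fun e => pn_no_arc_root N u (e ▸ h)
  obtain ⟨w, hw⟩ := exists_in_arc (hT.2.2 v hr)
  have heq := arc_into_unique N hv (hT.1 w v hw) h
  exact heq ▸ hw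

lemma st_arc_of_retic (N : PhyloNet V) {T : V → V → Prop} (hT : IsSupportTree N T)
    {u v : V} (hu : IsRetic N u) (h : N.Arc u v) : T u v := by
  have hne : outDeg T u ≠ 0 := fun h0 => retic_not_leaf N hu (hT.2 u h0)
  obtain ⟨w, hw⟩ := exists_out_arc hne
  have heq := arc_out_unique N hu (hT.1.1 u w hw) h
  exact heq ▸ hw

lemma st_arboreal (N : PhyloNet V) {T : V → V → Prop} (hT : IsSupportTree N T)
    {u v : V} (h : ArborealArc N u v) : T u v := by
  rcases h.2 with hu | hv
  · exact st_arc_of_retic N hT hu h.1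
  · exact rst_arc_of_nonretic N hT.1 hv h.1

lemma qt_not_retic (N : PhyloNet V) {q : V} (h : Qt N q) : ¬ IsRetic N q := by
  obtain ⟨r, har, hrt⟩ := h
  exact hrt.2 q har

lemma retic_parent_unique (N : PhyloNet V) (hN : TreeBased N) {v p1 p2 : V}
    (h1 : N.Arc p1 v) (h2 : N.Arc p2 v) (hr1 : IsRetic N p1) (hr2 : IsRetic N p2) :
    p1 = p2 := by
  obtain ⟨T, hT⟩ := hN
  have t1 := st_arc_of_retic N hT hr1 h1
  have t2 := st_arc_of_retic N hT hr2 h2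
  have hvr : v ≠ N.root := fun e => pn_no_arc_root N p1 (e ▸ h1)
  exact in_arc_unique (hT.1.2.2 v hvr) t1 t2

lemma omnian_qt (N : PhyloNet V) (hN : TreeBased N) {v : V} (hx : v ∉ N.X)
    (hv : ¬ IsRetic N v) (hall : ∀ c, N.Arc v c → IsRetic N c) : Qt N v := by
  obtain ⟨T, hT⟩ := hN
  have hne : outDeg T v ≠ 0 := fun h0 => hx (hT.2 v h0)
  obtain ⟨c, hc⟩ := exists_out_arc hne
  have hac : N.Arc v c := hT.1.1 v c hc
  refine ⟨c, hac, hall c hac, ?_⟩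
  intro p hp hpr
  have tp := st_arc_of_retic N hT hpr hp
  have hcr : c ≠ N.root := retic_ne_root N (hall c hac)
  have heq := in_arc_unique (hT.1.2.2 c hcr) tp hc
  exact hv (heq ▸ hpr)

end AuxProof

/-- a subset `A'` of the arcs of a tree-based network `N` is the arc set
of a support tree iff it is the union of the arboreal arcs with a supporting set of `J_N`. -/
theorem stmt16 {V : Type*} [Fintype V] [DecidableEq V] (N : PhyloNet V)
    (hN : TreeBased N) (A' : Finset (V × V)) (hsub : ∀ e ∈ A', N.Arc e.1 e.2) :
    IsSupportTree N (fun u v => (u, v) ∈ A') ↔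
      ∃ E : Finset (V × V), IsSupportingSet N E ∧
        ∀ e : V × V, e ∈ A' ↔ (ArborealArc N e.1 e.2 ∨ e ∈ E) := by
  classical
  constructor
  · intro hT
    refine ⟨A'.filter (fun e => ¬ ArborealArc N e.1 e.2), ⟨?_, ?_, ?_⟩, ?_⟩
    · -- every edge of E is a JEdge
      intro e he
      rw [Finset.mem_filter] at he
      obtain ⟨heA, hna⟩ := he
      have harc := hsub e heA
      have hnr1 : ¬ IsRetic N e.1 := fun h => hna ⟨harc, Or.inl h⟩
      have hr2 : IsRetic N e.2 := by
        by_contra h; exact hna ⟨harc, Or.inr h⟩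
      have hT12 : (fun u v => (u, v) ∈ A') e.1 e.2 := by simpa using heA
      have hrt : Rt N e.2 := by
        refine ⟨hr2, ?_⟩
        intro p hp hpr
        have tp := st_arc_of_retic N hT hpr hp
        have hne : e.2 ≠ N.root := retic_ne_root N hr2
        have := in_arc_unique (hT.1.2.2 e.2 hne) tp hT12
        exact hnr1 (this ▸ hpr)
      exact ⟨⟨e.2, harc, hrt⟩, hrt, harc⟩
    · -- omnian coverage
      intro q hq homn
      have hnr : ¬ IsRetic N q := qt_not_retic N hq
      have hne : outDeg (fun u v => (u, v) ∈ A') q ≠ 0 := fun h0 => homn.1 (hT.2 q h0)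
      obtain ⟨c, hc⟩ := exists_out_arc hne
      have hcA : (q, c) ∈ A' := hc
      have harc := hsub (q, c) hcA
      refine ⟨(q, c), Finset.mem_filter.2 ⟨hcA, ?_⟩, rfl⟩
      rintro ⟨_, h | h⟩
      · exact hnr h
      · exact h (homn.2 c harc)
    · -- exactly one per Rt
      intro r hrt
      have hrne : r ≠ N.root := retic_ne_root N hrt.1
      obtain ⟨a, ha⟩ := exists_in_arc (hT.1.2.2 r hrne)
      have haA : (a, r) ∈ A' := ha
      have harc := hsub (a, r) haA
      have hnar : ¬ ArborealArc N a r := by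
        rintro ⟨_, h | h⟩
        · exact hrt.2 a harc h
        · exact h hrt.1
      refine ⟨(a, r), ⟨Finset.mem_filter.2 ⟨haA, hnar⟩, rfl⟩, ?_⟩
      rintro ⟨u, s⟩ ⟨hmem, hs⟩
      rw [Finset.mem_filter] at hmem
      have hs' : s = r := hs
      have hu : (fun u v => (u, v) ∈ A') u r := by rw [← hs']; exact hmem.1
      have := in_arc_unique (hT.1.2.2 r hrne) hu ha
      rw [Prod.mk.injEq]
      exact ⟨this, hs'⟩
    · -- membership equivalence
      intro e
      constructor
      · intro he
        by_cases h : ArborealArc N e.1 e.2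
        · exact Or.inl h
        · exact Or.inr (Finset.mem_filter.2 ⟨he, h⟩)
      · rintro (h | h)
        · have := st_arboreal N hT h
          simpa using this
        · exact (Finset.mem_filter.1 h).1
  · rintro ⟨E, ⟨hEJ, hEomn, hEret⟩, hAE⟩
    have key : ∀ v, v ≠ N.root → ∃ a, {u | (u, v) ∈ A'} = {a} := by
      intro v hv
      by_cases hr : IsRetic N v
      · by_cases hrt : Rt N v
        · obtain ⟨e, ⟨heE, he2⟩, huniq⟩ := hEret v hrt
          refine ⟨e.1, ?_⟩
          ext u
          simp only [Set.mem_setOf_eq, Set.mem_singleton_iff]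
          constructor
          · intro hu
            rcases (hAE (u, v)).1 hu with h | h
            · rcases h.2 with h1 | h1
              · exact absurd h1 (hrt.2 u h.1)
              · exact absurd hr h1
            · have heq := huniq (u, v) ⟨h, rfl⟩
              exact congrArg Prod.fst heq
          · rintro rfl
            refine (hAE (e.1, v)).2 (Or.inr ?_)
            have : (e.1, v) = e := by rw [← he2]
            rw [this]; exact heE
        · have hpar : ∃ p, N.Arc p v ∧ IsRetic N p := by
            by_contra h
            push_neg at h
            exact hrt ⟨hr, fun u hu hru => h u hu hru⟩
          obtain ⟨p, hp, hpr⟩ := hpar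
          refine ⟨p, ?_⟩
          ext u
          simp only [Set.mem_setOf_eq, Set.mem_singleton_iff]
          constructor
          · intro hu
            rcases (hAE (u, v)).1 hu with h | h
            · rcases h.2 with h1 | h1
              · exact retic_parent_unique N hN h.1 hp h1 hpr
              · exact absurd hr h1
            · exact absurd ((hEJ _ h).2.1) hrt
          · intro h
            rw [h]
            exact (hAE (p, v)).2 (Or.inl ⟨hp, Or.inl hpr⟩)
      · have h1 := indeg_one_of N hv hr
        obtain ⟨a, hs⟩ := Set.ncard_eq_one.1 h1
        have haarc : N.Arc a v := by
          have : a ∈ ({a} : Set V) := rfl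
          rw [← hs] at this
          exact this
        refine ⟨a, ?_⟩
        ext u
        simp only [Set.mem_setOf_eq, Set.mem_singleton_iff]
        constructor
        · intro hu
          have h2 : u ∈ {u | N.Arc u v} := hsub (u, v) hu
          rw [hs] at h2
          exact h2
        · intro h
          rw [h]
          exact (hAE (a, v)).2 (Or.inl ⟨haarc, Or.inr hr⟩)
    refine ⟨⟨fun u v h => hsub (u, v) h, fun v => ?_, fun v hv => ?_⟩, fun v h0 => ?_⟩
    · constructor
      · intro h0
        by_contra hv
        obtain ⟨a, hs⟩ := key v hv
        have : ({u | (u, v) ∈ A'}).ncard = 0 := h0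
        rw [hs, Set.ncard_singleton] at this
        omega
      · rintro rfl
        have hemp : {u | (u, N.root) ∈ A'} = ∅ := by
          ext u
          simp only [Set.mem_setOf_eq, Set.mem_empty_iff_false, iff_false]
          intro hu
          exact pn_no_arc_root N u (hsub (u, N.root) hu)
        show ({u | (u, N.root) ∈ A'}).ncard = 0
        rw [hemp, Set.ncard_empty]
    · obtain ⟨a, hs⟩ := key v hv
      show ({u | (u, v) ∈ A'}).ncard = 1
      rw [hs, Set.ncard_singleton]
    · by_contra hx
      have hc : ∃ c, (v, c) ∈ A' := by
        by_cases hr : IsRetic N v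
        · have : outDeg N.Arc v ≠ 0 := by rw [retic_out_one N hr]; omega
          obtain ⟨c, hc⟩ := exists_out_arc this
          exact ⟨c, (hAE (v, c)).2 (Or.inl ⟨hc, Or.inl hr⟩)⟩
        · by_cases hall : ∀ c, N.Arc v c → IsRetic N c
          · have hq := omnian_qt N hN hx hr hall
            obtain ⟨e, heE, he1⟩ := hEomn v hq ⟨hx, hall⟩
            refine ⟨e.2, (hAE (v, e.2)).2 (Or.inr ?_)⟩
            have : (v, e.2) = e := by rw [← he1]
            rw [this]; exact heE
          · push_neg at hall
            obtain ⟨c, hc, hcr⟩ := hall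
            exact ⟨c, (hAE (v, c)).2 (Or.inl ⟨hc, Or.inr hcr⟩)⟩
      obtain ⟨c, hc⟩ := hc
      have hemp : {c | (v, c) ∈ A'} = ∅ :=
        (Set.ncard_eq_zero (Set.toFinite _)).1 h0
      have : c ∈ {c | (v, c) ∈ A'} := hc
      rw [hemp] at this
      exact this
end
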